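/- The function x ↦ 5·W(x)⁴·ΛW(x) is (absolutely) integrable on ℝ³ and ∫_{ℝ³} 5·W(x)⁴·ΛW(x) dx = −2π. -/

import Mathlib

open MeasureTheory Real Filter Topology

noncomputable section

/-- ℝ³ as a Euclidean space. -/
abbrev E3 := EuclideanSpace ℝ (Fin 3)

/-- The ground state soliton `W(x) = √3 (1 + 3|x|²)^(-1/2)`. -/
def W (x : E3) : ℝ := Real.sqrt 3 * (1 + 3 * ‖x‖ ^ 2) ^ (-(1 / 2) : ℝ)

/-- The scaling derivative `ΛW(x) = (1/2) W(x) + x · ∇W(x)`. -/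
def LamW (x : E3) : ℝ := (1 / 2) * W x + (inner ℝ x (gradient W x) : ℝ)

lemma ht_pos (y : ℝ) : (0:ℝ) < 1 + 3 * y ^ 2 := by positivity

lemma gradW (x : E3) :
    HasGradientAt W ((-3 * Real.sqrt 3 * (1 + 3 * ‖x‖ ^ 2) ^ (-(3/2) : ℝ)) • x) x := by
  have h1 : HasFDerivAt (fun y : E3 => 1 + 3 * ‖y‖ ^ 2)
      ((6:ℝ) • (innerSL ℝ x)) x := by
    have := (hasFDerivAt_id x).norm_sq
    have h2 := this.const_mul (3:ℝ)
    have h3 := h2.const_add (1:ℝ)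
    refine h3.congr_fderiv ?_
    ext y
    simp [smul_smul]
    ring
  have h4 : HasDerivAt (fun t : ℝ => Real.sqrt 3 * t ^ (-(1/2) : ℝ))
      (Real.sqrt 3 * (-(1/2) * (1 + 3 * ‖x‖ ^ 2) ^ (-(1/2) - 1 : ℝ))) (1 + 3 * ‖x‖ ^ 2) := by
    exact (Real.hasDerivAt_rpow_const (Or.inl (ht_pos ‖x‖).ne')).const_mul _
  have h5 := h4.comp_hasFDerivAt x h1
  rw [hasGradientAt_iff_hasFDerivAt]
  refine h5.congr_fderiv ?_
  ext y
  simp [InnerProductSpace.toDual_apply_apply, real_inner_smul_left, smul_smul]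
  left
  rw [show (-2⁻¹ - 1 : ℝ) = -(3/2) by norm_num]
  ring

/-- The radial profile of `5 W⁴ ΛW`. -/
def Fr (r : ℝ) : ℝ := (45 * Real.sqrt 3 / 2) * (1 - 3 * r ^ 2) * (1 + 3 * r ^ 2) ^ (-(7/2) : ℝ)

lemma key (x : E3) : 5 * W x ^ 4 * LamW x = Fr ‖x‖ := by
  have ht : (0:ℝ) < 1 + 3 * ‖x‖ ^ 2 := ht_pos ‖x‖
  set r := ‖x‖ with hr
  set t := 1 + 3 * r ^ 2 with htt
  set u := t ^ (-(1/2) : ℝ) with hu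
  have hu3 : t ^ (-(3/2) : ℝ) = u ^ 3 := by
    rw [hu, ← Real.rpow_natCast (t ^ (-(1/2):ℝ)) 3, ← Real.rpow_mul ht.le]; norm_num
  have hu7 : t ^ (-(7/2) : ℝ) = u ^ 7 := by
    rw [hu, ← Real.rpow_natCast (t ^ (-(1/2):ℝ)) 7, ← Real.rpow_mul ht.le]; norm_num
  have hu2 : u ^ 2 = t ^ (-1 : ℝ) := by
    rw [hu, ← Real.rpow_natCast (t ^ (-(1/2):ℝ)) 2, ← Real.rpow_mul ht.le]; norm_num
  have hu5 : u ^ 5 = t * u ^ 7 := by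
    have h5 : u ^ 5 = u ^ 2 * u ^ 3 := by ring
    rw [h5, hu2, Real.rpow_neg_one]
    have h7 : u ^ 7 = u ^ 2 * u ^ 2 * u ^ 3 := by ring
    rw [h7, hu2, Real.rpow_neg_one]
    field_simp
  have hs4 : Real.sqrt 3 ^ 4 = 9 := by
    have := Real.sq_sqrt (by norm_num : (3:ℝ) ≥ 0)
    nlinarith [this]
  have hginner : (inner ℝ x (gradient W x) : ℝ) = -3 * Real.sqrt 3 * u ^ 3 * r ^ 2 := by
    rw [(gradW x).gradient, real_inner_smul_right, real_inner_self_eq_norm_sq, ← hu3]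
  have hw : W x = Real.sqrt 3 * u := rfl
  rw [LamW, hw, hginner, Fr, ← htt, hu7]
  set s := Real.sqrt 3
  linear_combination ((5/2)*s*u^5 - 15*s*r^2*u^7) * hs4 + (45*s/2) * hu5

/-- The derivative profile (up to constant) of the radial integral. -/
def g (y : ℝ) : ℝ := y ^ 2 * (1 - 3 * y ^ 2) * (1 + 3 * y ^ 2) ^ (-(7/2) : ℝ)

/-- The antiderivative. -/
def G (y : ℝ) : ℝ := (y ^ 3 / 3 - y ^ 5 / 5) * (1 + 3 * y ^ 2) ^ (-(5/2) : ℝ)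

lemma hasDerivG (y : ℝ) : HasDerivAt G (g y) y := by
  have h1 : HasDerivAt (fun y : ℝ => 1 + 3 * y ^ 2) (6 * y) y := by
    have := ((hasDerivAt_pow 2 y).const_mul (3:ℝ)).const_add (1:ℝ)
    refine this.congr_deriv ?_
    · push_cast; ring
  have h2 : HasDerivAt (fun y : ℝ => (1 + 3 * y ^ 2) ^ (-(5/2) : ℝ))
      (-(5/2) * (1 + 3 * y ^ 2) ^ (-(5/2) - 1 : ℝ) * (6 * y)) y :=
    by have := (Real.hasDerivAt_rpow_const (x := 1 + 3 * y ^ 2) (p := -(5/2)) (Or.inl (ht_pos y).ne')).comp y h1; exact this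
  have h3 : HasDerivAt (fun y : ℝ => y ^ 3 / 3 - y ^ 5 / 5) (y ^ 2 - y ^ 4) y := by
    have := ((hasDerivAt_pow 3 y).div_const (3:ℝ)).sub ((hasDerivAt_pow 5 y).div_const (5:ℝ))
    refine this.congr_deriv ?_
    push_cast; ring
  have h4 := h3.mul h2
  refine h4.congr_deriv ?_
  have e1 : (-(5/2) - 1 : ℝ) = -(7/2) := by norm_num
  have e2 : ((1 + 3 * y ^ 2) : ℝ) ^ (-(5/2) : ℝ)
      = (1 + 3 * y ^ 2) * (1 + 3 * y ^ 2) ^ (-(7/2) : ℝ) := by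
    rw [show (-(5/2) : ℝ) = 1 + -(7/2) by norm_num, Real.rpow_add (ht_pos y), Real.rpow_one]
  rw [g, e1, e2]
  ring

lemma g_integrableOn : IntegrableOn g (Set.Ioi (0:ℝ)) := by
  have hc : Continuous g := by
    apply (continuous_pow 2 |>.mul (by continuity)).mul
    exact (by continuity : Continuous fun y : ℝ => 1 + 3 * y ^ 2).rpow_const
      (fun y => Or.inl (ht_pos y).ne')
  have h01 : IntegrableOn g (Set.Ioc (0:ℝ) 1) :=
    (hc.continuousOn.integrableOn_Icc).mono_set Set.Ioc_subset_Icc_self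
  have h1i : IntegrableOn g (Set.Ioi (1:ℝ)) := by
    have hbase : IntegrableOn (fun y : ℝ => y ^ (-3 : ℝ)) (Set.Ioi (1:ℝ)) :=
      integrableOn_Ioi_rpow_of_lt (by norm_num) one_pos
    refine ((hbase.const_mul (4:ℝ)).mono' (hc.aestronglyMeasurable.restrict) ?_)
    filter_upwards [ae_restrict_mem measurableSet_Ioi] with y (hy : 1 < y)
    have hy0 : (0:ℝ) < y := lt_trans one_pos hy
    have hy1 : (1:ℝ) ≤ y ^ 2 := one_le_pow₀ hy.le
    have b1 : |1 - 3 * y ^ 2| ≤ 4 * y ^ 2 := by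
      rw [abs_le]; constructor <;> nlinarith
    have b2 : (1 + 3 * y ^ 2 : ℝ) ^ (-(7/2) : ℝ) ≤ (y ^ 2) ^ (-(7/2) : ℝ) := by
      apply Real.rpow_le_rpow_of_nonpos (by positivity) (by nlinarith) (by norm_num)
    have b3 : ((y:ℝ) ^ 2) ^ (-(7/2) : ℝ) = y ^ (-7 : ℝ) := by
      rw [← Real.rpow_natCast y 2, ← Real.rpow_mul hy0.le]; norm_num
    have hnn : (0:ℝ) ≤ (1 + 3 * y ^ 2 : ℝ) ^ (-(7/2) : ℝ) := Real.rpow_nonneg (by positivity) _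
    calc ‖g y‖ = |y ^ 2 * (1 - 3 * y ^ 2)| * (1 + 3 * y ^ 2) ^ (-(7/2) : ℝ) := by
          rw [Real.norm_eq_abs, g, abs_mul, abs_of_nonneg hnn]
      _ ≤ (y ^ 2 * (4 * y ^ 2)) * (y ^ 2) ^ (-(7/2) : ℝ) := by
          apply mul_le_mul _ b2 hnn (by positivity)
          rw [abs_mul, abs_of_nonneg (by positivity : (0:ℝ) ≤ y ^ 2)]
          exact mul_le_mul_of_nonneg_left b1 (by positivity)
      _ = 4 * (y ^ 4 * y ^ (-7 : ℝ)) := by rw [b3]; ring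
      _ ≤ 4 * y ^ (-3 : ℝ) := by
          rw [← Real.rpow_natCast y 4, ← Real.rpow_add hy0]
          norm_num
  have := h01.union h1i
  apply this.mono_set
  intro y hy
  rcases le_or_gt y 1 with h | h
  · exact Set.mem_union_left _ ⟨hy, h⟩
  · exact Set.mem_union_right _ h

lemma G_tendsto : Tendsto G atTop (𝓝 (-(1/5) * (1/3 : ℝ) ^ ((5:ℝ)/2))) := by
  have h0 : Tendsto (fun y : ℝ => 1 / y ^ 2) atTop (𝓝 0) := by
    have hp : Tendsto (fun y : ℝ => y ^ 2) atTop atTop := tendsto_pow_atTop two_ne_zero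
    simpa [one_div, Pi.inv_def] using hp.inv_tendsto_atTop
  have h1 : Tendsto (fun y : ℝ => y ^ 2 / (1 + 3 * y ^ 2)) atTop (𝓝 (1/3)) := by
    have : Tendsto (fun y : ℝ => 1 / (1 / y ^ 2 + 3)) atTop (𝓝 (1 / (0 + 3))) := by
      apply Tendsto.div tendsto_const_nhds (h0.add tendsto_const_nhds) (by norm_num)
    rw [show (1 / (0 + 3) : ℝ) = 1/3 by norm_num] at this
    apply this.congr'
    filter_upwards [eventually_gt_atTop (0:ℝ)] with y hy
    have : y ^ 2 ≠ 0 := by positivity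
    field_simp
  have h2 : Tendsto (fun y : ℝ => (y ^ 2 / (1 + 3 * y ^ 2)) ^ ((5:ℝ)/2)) atTop
      (𝓝 ((1/3 : ℝ) ^ ((5:ℝ)/2))) := by
    exact ((Real.continuousAt_rpow_const _ _ (Or.inl (by norm_num))).tendsto).comp h1
  have h3 : Tendsto (fun y : ℝ => 1 / (3 * y ^ 2) - 1/5) atTop (𝓝 (-(1/5))) := by
    have : Tendsto (fun y : ℝ => 1 / (3 * y ^ 2)) atTop (𝓝 0) := by
      have hp : Tendsto (fun y : ℝ => y ^ 2) atTop atTop := tendsto_pow_atTop two_ne_zero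
      have hp3 : Tendsto (fun y : ℝ => 3 * y ^ 2) atTop atTop :=
        Tendsto.const_mul_atTop (by norm_num : (0:ℝ) < 3) hp
      simpa [one_div, Pi.inv_def] using hp3.inv_tendsto_atTop
    simpa using this.sub (tendsto_const_nhds (x := (1/5 : ℝ)))
  have h4 := h3.mul h2
  rw [show (-(1/5) * (1/3 : ℝ) ^ ((5:ℝ)/2)) = (-(1/5)) * ((1/3 : ℝ) ^ ((5:ℝ)/2)) from rfl]
  apply h4.congr'
  filter_upwards [eventually_gt_atTop (0:ℝ)] with y hy
  have hy2 : (0:ℝ) ≤ y ^ 2 := by positivity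
  have e1 : (y ^ 2 / (1 + 3 * y ^ 2)) ^ ((5:ℝ)/2)
      = y ^ 5 * (1 + 3 * y ^ 2) ^ (-(5/2) : ℝ) := by
    have ha : ((y ^ 2 : ℝ)) ^ ((5:ℝ)/2) = y ^ (5:ℕ) := by
      rw [← Real.rpow_natCast y 2, ← Real.rpow_mul hy.le, ← Real.rpow_natCast y 5]
      norm_num
    rw [Real.div_rpow hy2 (ht_pos y).le, ha, Real.rpow_neg (ht_pos y).le, div_eq_mul_inv]
  rw [e1, G]
  have h3y : (3 * y ^ 2 : ℝ) ≠ 0 := by positivity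
  field_simp

lemma integral_g : ∫ y in Set.Ioi (0:ℝ), g y = -(1/5) * (1/3 : ℝ) ^ ((5:ℝ)/2) := by
  have h := integral_Ioi_of_hasDerivAt_of_tendsto
    (f := G) (f' := g) (a := 0) (m := -(1/5) * (1/3 : ℝ) ^ ((5:ℝ)/2))
    ((hasDerivG 0).continuousAt.continuousWithinAt)
    (fun y _ => hasDerivG y) g_integrableOn G_tendsto
  rw [h, G]
  norm_num

lemma Fr_continuous : Continuous Fr := by
  apply Continuous.mul (by continuity)
  exact (by continuity : Continuous fun r : ℝ => 1 + 3 * r ^ 2).rpow_const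
    (fun r => Or.inl (ht_pos r).ne')

lemma Fr_bound (r : ℝ) (hr : 0 ≤ r) :
    ‖Fr r‖ ≤ (45 * Real.sqrt 3 / 2) * 3 ^ ((5:ℝ)/2) * (1 + r) ^ (-(5:ℝ)) := by
  have h1r : (0:ℝ) < 1 + r := by linarith
  have ht : (0:ℝ) < 1 + 3 * r ^ 2 := ht_pos r
  have hs : (0:ℝ) ≤ 45 * Real.sqrt 3 / 2 := by positivity
  have hnn : (0:ℝ) ≤ (1 + 3 * r ^ 2 : ℝ) ^ (-(7/2) : ℝ) := Real.rpow_nonneg ht.le _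
  have b1 : |1 - 3 * r ^ 2| ≤ 1 + 3 * r ^ 2 := by
    rw [abs_le]; constructor <;> nlinarith
  have e0 : (1 + 3 * r ^ 2 : ℝ) * (1 + 3 * r ^ 2) ^ (-(7/2) : ℝ)
      = (1 + 3 * r ^ 2) ^ (-(5/2) : ℝ) := by
    rw [show (-(5/2) : ℝ) = 1 + -(7/2) by norm_num, Real.rpow_add ht, Real.rpow_one]
  have step1 : ‖Fr r‖ ≤ (45 * Real.sqrt 3 / 2) * (1 + 3 * r ^ 2) ^ (-(5/2) : ℝ) := by
    rw [Real.norm_eq_abs, Fr, abs_mul, abs_mul, abs_of_nonneg hs, abs_of_nonneg hnn, mul_assoc,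
      ← e0]
    apply mul_le_mul_of_nonneg_left _ hs
    exact mul_le_mul_of_nonneg_right b1 hnn
  have hb : ((1 + r) ^ 2 : ℝ) / 3 ≤ 1 + 3 * r ^ 2 := by nlinarith
  have step2 : ((1 + 3 * r ^ 2 : ℝ)) ^ (-(5/2) : ℝ) ≤ (((1 + r) ^ 2 : ℝ) / 3) ^ (-(5/2) : ℝ) :=
    Real.rpow_le_rpow_of_nonpos (by positivity) hb (by norm_num)
  have step3 : ((((1 + r) ^ 2 : ℝ)) / 3) ^ (-(5/2) : ℝ) = 3 ^ ((5:ℝ)/2) * (1 + r) ^ (-(5:ℝ)) := by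
    have ha : (((1 + r) ^ 2 : ℝ)) ^ (-(5/2) : ℝ) = (1 + r) ^ (-(5:ℝ)) := by
      rw [← Real.rpow_natCast (1 + r) 2, ← Real.rpow_mul h1r.le]
      norm_num
    rw [Real.div_rpow (by positivity) (by norm_num), ha,
      show (-(5/2) : ℝ) = -((5:ℝ)/2) by norm_num, Real.rpow_neg (by norm_num : (0:ℝ) ≤ 3),
      div_eq_mul_inv, inv_inv, mul_comm]
  calc ‖Fr r‖ ≤ (45 * Real.sqrt 3 / 2) * (1 + 3 * r ^ 2) ^ (-(5/2) : ℝ) := step1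
    _ ≤ (45 * Real.sqrt 3 / 2) * ((((1 + r) ^ 2 : ℝ)) / 3) ^ (-(5/2) : ℝ) :=
        mul_le_mul_of_nonneg_left step2 hs
    _ = (45 * Real.sqrt 3 / 2) * 3 ^ ((5:ℝ)/2) * (1 + r) ^ (-(5:ℝ)) := by rw [step3]; ring

lemma Fr_integrable : Integrable (fun x : E3 => Fr ‖x‖) := by
  have hfin : ((Module.finrank ℝ E3 : ℝ)) < 5 := by
    simp [finrank_euclideanSpace_fin]; norm_num
  have hbase : Integrable (fun x : E3 => (1 + ‖x‖) ^ (-(5:ℝ))) := integrable_one_add_norm hfin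
  refine (hbase.const_mul ((45 * Real.sqrt 3 / 2) * 3 ^ ((5:ℝ)/2))).mono'
    ((Fr_continuous.comp continuous_norm).aestronglyMeasurable) ?_
  filter_upwards with x
  exact Fr_bound ‖x‖ (norm_nonneg x)

lemma vol_ball : (volume (Metric.ball (0:E3) 1)).toReal = 4 * π / 3 := by
  rw [EuclideanSpace.volume_ball]
  have hΓ : Real.Gamma ((Fintype.card (Fin 3) : ℝ) / 2 + 1) = 3 / 4 * Real.sqrt π := by
    rw [Fintype.card_fin]
    rw [show ((3:ℕ) : ℝ) / 2 + 1 = (1/2 + 1) + 1 by norm_num, Real.Gamma_add_one (by norm_num),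
      Real.Gamma_add_one (by norm_num), Real.Gamma_one_half_eq]
    ring
  rw [hΓ, Fintype.card_fin]
  have hsp : Real.sqrt π ^ 3 = π * Real.sqrt π := by
    have := Real.sq_sqrt Real.pi_pos.le
    nlinarith [Real.sqrt_nonneg π]
  have hspos : (0:ℝ) < Real.sqrt π := Real.sqrt_pos.mpr Real.pi_pos
  rw [hsp]
  rw [ENNReal.toReal_mul, ENNReal.toReal_pow, ENNReal.toReal_ofReal (by norm_num : (0:ℝ) ≤ 1),
    ENNReal.toReal_ofReal (by positivity)]
  rw [one_pow, one_mul]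
  field_simp

lemma sqrt3_rpow : Real.sqrt 3 * (1/3 : ℝ) ^ ((5:ℝ)/2) = 1 / 9 := by
  have h1 : (1/3 : ℝ) ^ ((5:ℝ)/2) = 3 ^ (-((5:ℝ)/2)) := by
    rw [one_div, Real.inv_rpow (by norm_num : (0:ℝ) ≤ 3),
      ← Real.rpow_neg (by norm_num : (0:ℝ) ≤ 3)]
  have h2 : Real.sqrt 3 = (3:ℝ) ^ ((1:ℝ)/2) := Real.sqrt_eq_rpow 3
  rw [h1, h2, ← Real.rpow_add (by norm_num : (0:ℝ) < 3)]
  rw [show (1:ℝ)/2 + -((5:ℝ)/2) = ((-2:ℤ) : ℝ) by norm_num, Real.rpow_intCast]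
  norm_num

theorem stmt7 :
    Integrable (fun x : E3 => 5 * W x ^ 4 * LamW x) ∧
    ∫ x : E3, 5 * W x ^ 4 * LamW x = -(2 * Real.pi) := by
  have hfun : (fun x : E3 => 5 * W x ^ 4 * LamW x) = fun x => Fr ‖x‖ := funext key
  constructor
  · rw [hfun]; exact Fr_integrable
  · rw [hfun]
    rw [integral_fun_norm_addHaar volume Fr]
    have hdim : Module.finrank ℝ E3 = 3 := finrank_euclideanSpace_fin
    rw [hdim]
    have e1 : ∀ y : ℝ, y ^ (3 - 1) • Fr y = (45 * Real.sqrt 3 / 2) * g y := by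
      intro y
      rw [smul_eq_mul, Fr, g]
      ring
    rw [show (∫ y in Set.Ioi (0:ℝ), y ^ (3-1) • Fr y)
        = ∫ y in Set.Ioi (0:ℝ), (45 * Real.sqrt 3 / 2) * g y from by
      apply setIntegral_congr_fun measurableSet_Ioi; intro y _; exact e1 y]
    rw [integral_const_mul, integral_g, measureReal_def, vol_ball]
    rw [nsmul_eq_mul, smul_eq_mul]
    push_cast
    nlinarith [sqrt3_rpow, Real.pi_pos]

end
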